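/- Let (X,d,m) be a doubling metric measure space, let E ⊆ X be a Borel set and let f : X → ℝ be Lipschitz. Then for m-a.e. x ∈ E one has lip(f|_E)(x) = lip(f)(x), where lip(f|_E) denotes the local Lipschitz constant of the restriction f|_E computed in the metric subspace (E, d|_{E×E}). -/

import Mathlib

open MeasureTheory Metric Set Filter Topology

/-- The local Lipschitz constant `lip(f)(x)` of a real-valued function on a metric space:
the limsup of `|f y − f x| / d(y,x)` as `y → x`, `y ≠ x` (equal to `0` at isolated points,
since there the filter `𝓝[≠] x` is trivial). Valued in `ℝ≥0∞`. -/
noncomputable def locLipConst {Y : Type*} [MetricSpace Y] (f : Y → ℝ) (x : Y) : ENNReal :=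
  Filter.limsup (fun y => ENNReal.ofReal (|f y - f x| / dist y x)) (𝓝[≠] x)

/-- If `(X,d,m)` is a doubling metric measure space, `E ⊆ X` is Borel and
`f : X → ℝ` is Lipschitz, then for `m`-a.e. `x ∈ E` the local Lipschitz constant of the
restriction `f|_E` (computed in the metric subspace `E`) coincides with `lip f x`. -/
theorem stmt1 {X : Type*} [MetricSpace X] [CompleteSpace X] [SecondCountableTopology X]
    [MeasurableSpace X] [BorelSpace X] (m : Measure X)
    (hdoub : ∃ C : NNReal, 0 < C ∧ ∀ (x : X) (r : ℝ), 0 < r →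
      0 < m (ball x (2 * r)) ∧ m (ball x (2 * r)) ≤ (C : ENNReal) * m (ball x r) ∧
        m (ball x r) < ⊤)
    (E : Set X) (hE : MeasurableSet E)
    (f : X → ℝ) (hf : ∃ K : NNReal, LipschitzWith K f) :
    ∀ᵐ x ∂(m.restrict E), ∀ hx : x ∈ E,
      locLipConst (fun y : E => f y) ⟨x, hx⟩ = locLipConst f x := by
  obtain ⟨C, hCpos, hC⟩ := hdoub
  obtain ⟨K, hK⟩ := hf
  haveI : IsLocallyFiniteMeasure m :=
    ⟨fun x => ⟨ball x 1, ball_mem_nhds x one_pos, (hC x 1 one_pos).2.2⟩⟩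
  haveI : IsUnifLocDoublingMeasure m := by
    refine ⟨⟨C * C, Filter.eventually_of_mem self_mem_nhdsWithin fun ε hε x => ?_⟩⟩
    have hε' : (0:ℝ) < ε := hε
    calc m (closedBall x (2 * ε)) ≤ m (ball x (2 * (2 * ε))) :=
          measure_mono (closedBall_subset_ball (by linarith))
      _ ≤ C * m (ball x (2 * ε)) := (hC x (2*ε) (by linarith)).2.1
      _ ≤ C * (C * m (ball x ε)) := mul_le_mul_right (hC x ε hε').2.1 _
      _ ≤ ↑(C*C) * m (closedBall x ε) := by
          rw [ENNReal.coe_mul, mul_assoc]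
          exact mul_le_mul_right (mul_le_mul_right (measure_mono ball_subset_closedBall) _) _
  -- a.e. density-type property
  have hP : ∀ᵐ x ∂m.restrict E, ∀ n : ℕ,
      ∀ᶠ y in 𝓝[≠] x, ∃ z ∈ E, dist z y ≤ (1 / (n + 2 : ℝ)) * dist y x := by
    rw [ae_all_iff]
    intro n
    filter_upwards [IsUnifLocDoublingMeasure.ae_tendsto_measure_inter_div m E ((n:ℝ) + 2)]
      with x hx
    by_contra hcon
    rw [Filter.not_eventually] at hcon
    have hseq : ∀ k : ℕ, ∃ y, dist y x < 1 / ((k:ℝ) + 1) ∧ y ≠ x ∧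
        ∀ z ∈ E, ¬ dist z y ≤ (1 / (n + 2 : ℝ)) * dist y x := by
      intro k
      obtain ⟨y, ⟨hy1, hy2⟩, hy3⟩ :=
        (nhdsWithin_basis_ball.frequently_iff).mp hcon (1/((k:ℝ)+1)) (by positivity)
      refine ⟨y, by simpa [mem_ball] using hy1, hy2, ?_⟩
      push_neg at hy3
      exact fun z hz => not_le.mpr (hy3 z hz)
    choose y hy1 hy2 hy3 using hseq
    set δ : ℕ → ℝ := fun k => (1 / (n + 2 : ℝ)) * dist (y k) x with hδ
    have hδpos : ∀ k, 0 < δ k := fun k => mul_pos (by positivity) (dist_pos.2 (hy2 k))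
    have hδlim : Tendsto δ atTop (𝓝[>] 0) := by
      rw [tendsto_nhdsWithin_iff]
      constructor
      · have hlim : Tendsto (fun k : ℕ => (1/((n:ℝ)+2)) * (1/((k:ℝ)+1))) atTop (𝓝 0) := by
          have : Tendsto (fun k : ℕ => 1/((k:ℝ)+1)) atTop (𝓝 0) :=
            tendsto_one_div_add_atTop_nhds_zero_nat
          simpa using this.const_mul (1/((n:ℝ)+2))
        apply squeeze_zero (fun k => (hδpos k).le) (fun k => ?_) hlim
        exact mul_le_mul_of_nonneg_left (hy1 k).le (by positivity)
      · exact Filter.Eventually.of_forall fun k => hδpos k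
    have hmem : ∀ᶠ k in atTop, x ∈ closedBall (y k) (((n:ℝ) + 2) * δ k) := by
      apply Filter.Eventually.of_forall
      intro k
      rw [mem_closedBall, dist_comm, hδ]
      have hne : ((n:ℝ)+2) ≠ 0 := by positivity
      field_simp
      exact le_rfl
    have hlim1 := hx y δ hδlim hmem
    have hzero : ∀ k, m (E ∩ closedBall (y k) (δ k)) / m (closedBall (y k) (δ k)) = 0 := by
      intro k
      have hEe : E ∩ closedBall (y k) (δ k) = ∅ := by
        ext z
        simp only [mem_inter_iff, mem_closedBall, mem_empty_iff_false, iff_false, not_and]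
        intro hzE hzd
        exact hy3 k z hzE hzd
      rw [hEe, measure_empty, ENNReal.zero_div]
    rw [tendsto_congr hzero] at hlim1
    exact zero_ne_one (tendsto_nhds_unique tendsto_const_nhds hlim1)
  filter_upwards [hP] with x hPx hx
  set p : E := ⟨x, hx⟩ with hp
  set g : X → ENNReal := fun y => ENNReal.ofReal (|f y - f x| / dist y x) with hg
  have hrestr : locLipConst (fun y : E => f y) p = Filter.limsup (g ∘ Subtype.val) (𝓝[≠] p) := by
    rfl
  have hmapsto : Filter.Tendsto (Subtype.val : E → X) (𝓝[≠] p) (𝓝[≠] x) := by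
    apply ContinuousWithinAt.tendsto_nhdsWithin continuous_subtype_val.continuousWithinAt
    intro z hz hzx
    exact hz (Subtype.ext hzx)
  have hle : locLipConst (fun y : E => f y) p ≤ locLipConst f x := by
    rw [hrestr, Filter.limsup_comp]
    exact Filter.limsup_le_limsup_of_le hmapsto
  set A := locLipConst (fun y : E => f y) p with hA
  have hAtop : A ≠ ⊤ := by
    have hle2 : A ≤ ENNReal.ofReal K := by
      rw [hrestr]
      apply Filter.limsup_le_of_le (by isBoundedDefault)
      apply Filter.Eventually.of_forall
      intro z
      simp only [Function.comp_apply, hg]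
      apply ENNReal.ofReal_le_ofReal
      rcases eq_or_ne (dist (z : X) x) 0 with h0 | h0
      · rw [h0, div_zero]; exact K.2
      · rw [div_le_iff₀ (lt_of_le_of_ne dist_nonneg (Ne.symm h0))]
        calc |f z - f x| = dist (f z) (f x) := (Real.dist_eq _ _).symm
          _ ≤ K * dist (z : X) x := hK.dist_le_mul _ _
    exact (lt_of_le_of_lt hle2 ENNReal.ofReal_lt_top).ne
  have key : ∀ n : ℕ, locLipConst f x ≤
      ENNReal.ofReal ((A.toReal + 1/((n:ℝ)+1)) * (1 + 1/((n:ℝ)+2)) + K * (1/((n:ℝ)+2))) := by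
    intro n
    set ε : ℝ := 1/((n:ℝ)+2) with hε
    have hεpos : 0 < ε := by positivity
    have hεle : ε ≤ 1/2 := by
      rw [hε]
      apply one_div_le_one_div_of_le two_pos
      have : (0:ℝ) ≤ (n:ℝ) := Nat.cast_nonneg n
      linarith
    set B : ENNReal := A + ENNReal.ofReal (1/((n:ℝ)+1)) with hB
    have hBtop : B ≠ ⊤ := ENNReal.add_ne_top.2 ⟨hAtop, ENNReal.ofReal_ne_top⟩
    have hAB : A < B :=
      ENNReal.lt_add_right hAtop (ENNReal.ofReal_pos.2 (by positivity)).ne'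
    set b : ℝ := A.toReal + 1/((n:ℝ)+1) with hb
    have hbB : B.toReal = b := by
      rw [hB, ENNReal.toReal_add hAtop ENNReal.ofReal_ne_top,
        ENNReal.toReal_ofReal (by positivity)]
    have hbnn : 0 ≤ b := by
      rw [hb]; positivity
    have hev : ∀ᶠ z in 𝓝[≠] p, (g ∘ Subtype.val) z < B :=
      Filter.eventually_lt_of_limsup_lt (by rw [← hrestr]; exact hAB) (by isBoundedDefault)
    obtain ⟨r₁, hr₁pos, hr₁⟩ := (nhdsWithin_basis_ball.eventually_iff).mp hev
    have hball : ∀ᶠ y in 𝓝[≠] x, dist y x < r₁ / 2 :=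
      Filter.Eventually.filter_mono nhdsWithin_le_nhds
        (Metric.eventually_nhds_iff_ball.mpr ⟨r₁/2, by positivity, fun y hy => by
          simpa [mem_ball] using hy⟩)
    have hne : ∀ᶠ y in 𝓝[≠] x, y ≠ x := eventually_mem_nhdsWithin
    unfold locLipConst
    apply Filter.limsup_le_of_le (by isBoundedDefault)
    filter_upwards [hPx n, hball, hne] with y hy hyb hyx
    obtain ⟨z, hzE, hzy⟩ := hy
    have hrpos : 0 < dist y x := dist_pos.2 hyx
    have hzx_le : dist z x ≤ (1 + ε) * dist y x := by
      calc dist z x ≤ dist z y + dist y x := dist_triangle _ _ _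
        _ ≤ ε * dist y x + dist y x := by linarith
        _ = (1 + ε) * dist y x := by ring
    have hzx_lt : dist z x < r₁ := by
      have h1 : (1 + ε) * dist y x ≤ (3/2) * dist y x :=
        mul_le_mul_of_nonneg_right (by linarith) hrpos.le
      linarith
    have hzx_pos : 0 < dist z x := by
      have h1 : dist y x ≤ dist y z + dist z x := dist_triangle _ _ _
      have h2 : dist y z ≤ ε * dist y x := by rw [dist_comm]; exact hzy
      have h3 : ε * dist y x ≤ (1/2) * dist y x :=
        mul_le_mul_of_nonneg_right hεle hrpos.le
      linarith
    have hzne : z ≠ x := fun h => by rw [h, dist_self] at hzx_pos; exact lt_irrefl 0 hzx_pos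
    have hzball : (⟨z, hzE⟩ : E) ∈ ball p r₁ ∩ {p}ᶜ := by
      constructor
      · rw [mem_ball, Subtype.dist_eq]
        exact hzx_lt
      · intro hmem
        rw [mem_singleton_iff, Subtype.ext_iff] at hmem
        exact hzne hmem
    have hgz := hr₁ hzball
    have hfz : |f z - f x| ≤ b * dist z x := by
      simp only [Function.comp_apply, hg] at hgz
      have h2 : |f z - f x| / dist z x < B.toReal :=
        (ENNReal.ofReal_lt_iff_lt_toReal (by positivity) hBtop).mp hgz
      rw [hbB, div_lt_iff₀ hzx_pos] at h2
      exact h2.le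
    have hfy : |f y - f x| ≤ (b * (1 + ε) + K * ε) * dist y x := by
      have h1 : |f y - f z| ≤ (K : ℝ) * (ε * dist y x) := by
        calc |f y - f z| = dist (f y) (f z) := (Real.dist_eq _ _).symm
          _ ≤ K * dist y z := hK.dist_le_mul _ _
          _ ≤ K * (ε * dist y x) := by
              apply mul_le_mul_of_nonneg_left _ K.2
              rw [dist_comm]; exact hzy
      have h2 : b * dist z x ≤ b * ((1 + ε) * dist y x) :=
        mul_le_mul_of_nonneg_left hzx_le hbnn
      calc |f y - f x| ≤ |f y - f z| + |f z - f x| := abs_sub_le _ _ _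
        _ ≤ (K : ℝ) * (ε * dist y x) + b * ((1 + ε) * dist y x) :=
            add_le_add h1 (hfz.trans h2)
        _ = (b * (1 + ε) + K * ε) * dist y x := by ring
    apply ENNReal.ofReal_le_ofReal
    rw [div_le_iff₀ hrpos]
    exact hfy
  have htend : Filter.Tendsto (fun n : ℕ =>
      ENNReal.ofReal ((A.toReal + 1/((n:ℝ)+1)) * (1 + 1/((n:ℝ)+2)) + K * (1/((n:ℝ)+2))))
      atTop (𝓝 A) := by
    have t1 : Tendsto (fun n : ℕ => 1/((n:ℝ)+1)) atTop (𝓝 0) :=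
      tendsto_one_div_add_atTop_nhds_zero_nat
    have t2 : Tendsto (fun n : ℕ => 1/((n:ℝ)+2)) atTop (𝓝 0) := by
      simp only [one_div]
      exact tendsto_inv_atTop_zero.comp
        (tendsto_atTop_add_const_right atTop 2 tendsto_natCast_atTop_atTop)
    have t3 : Tendsto (fun n : ℕ =>
        (A.toReal + 1/((n:ℝ)+1)) * (1 + 1/((n:ℝ)+2)) + K * (1/((n:ℝ)+2))) atTop
        (𝓝 ((A.toReal + 0) * (1 + 0) + K * 0)) :=
      ((tendsto_const_nhds.add t1).mul (tendsto_const_nhds.add t2)).add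
        (tendsto_const_nhds.mul t2)
    simp only [add_zero, mul_zero, mul_one] at t3
    have := (ENNReal.continuous_ofReal.tendsto _).comp t3
    rwa [ENNReal.ofReal_toReal hAtop] at this
  exact le_antisymm hle (ge_of_tendsto' htend key)
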